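/- Let t ∈ ℝ ∖ supp(μ) and let (wₙ) be a sequence in ℍ with wₙ → t. Then χ_L(wₙ) → χ_E(t) and η_L(wₙ) → η_E(t) as n → ∞. -/

import Mathlib

open MeasureTheory Complex Filter Set

noncomputable section

/-- The support of a measure on `ℝ`. -/
def msupport (μ : Measure ℝ) : Set ℝ := {x | ∀ U ∈ nhds x, μ U ≠ 0}

/-- The Cauchy transform `C(w) = ∫ (w - x)⁻¹ dμ(x)`. -/
def cauchy (μ : Measure ℝ) (w : ℂ) : ℂ := ∫ x, (w - (x : ℂ))⁻¹ ∂μ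

/-- `f′_{(χ,η)}(w) = C(w) + Log (w - χ) - Log (w - χ - η + 1)`. -/
def fprime (μ : Measure ℝ) (χ η : ℝ) (w : ℂ) : ℂ :=
  cauchy μ w + Complex.log (w - (χ : ℂ)) - Complex.log (w - (χ : ℂ) - (η : ℂ) + 1)

/-- `χ_L(w) = w + (w - w̄)(e^{C(w̄)} - 1)/(e^{C(w)} - e^{C(w̄)})`. -/
def chiL (μ : Measure ℝ) (w : ℂ) : ℂ :=
  w + (w - (starRingEnd ℂ) w) * (Complex.exp (cauchy μ ((starRingEnd ℂ) w)) - 1) /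
    (Complex.exp (cauchy μ w) - Complex.exp (cauchy μ ((starRingEnd ℂ) w)))

/-- `η_L(w) = 1 + (w - w̄)(e^{C(w)} - 1)(e^{C(w̄)} - 1)/(e^{C(w)} - e^{C(w̄)})`. -/
def etaL (μ : Measure ℝ) (w : ℂ) : ℂ :=
  1 + (w - (starRingEnd ℂ) w) * (Complex.exp (cauchy μ w) - 1) *
      (Complex.exp (cauchy μ ((starRingEnd ℂ) w)) - 1) /
    (Complex.exp (cauchy μ w) - Complex.exp (cauchy μ ((starRingEnd ℂ) w)))

/-- The real Cauchy transform `C(t) = ∫ (t - x)⁻¹ dμ(x)` at a real point. -/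
def Creal (μ : Measure ℝ) (t : ℝ) : ℝ := ∫ x, (t - x)⁻¹ ∂μ

/-- `C′(t) = -∫ (t - x)⁻² dμ(x)`. -/
def Cder (μ : Measure ℝ) (t : ℝ) : ℝ := -∫ x, ((t - x) ^ 2)⁻¹ ∂μ

/-- `χ_E(t) = t + (e^{C(t)} - 1)/(e^{C(t)} C′(t))`. -/
def chiE (μ : Measure ℝ) (t : ℝ) : ℝ :=
  t + (Real.exp (Creal μ t) - 1) / (Real.exp (Creal μ t) * Cder μ t)

/-- `η_E(t) = 1 + (e^{C(t)} - 1)²/(e^{C(t)} C′(t))`. -/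
def etaE (μ : Measure ℝ) (t : ℝ) : ℝ :=
  1 + (Real.exp (Creal μ t) - 1) ^ 2 / (Real.exp (Creal μ t) * Cder μ t)

private lemma integral_ofReal'' {μ : Measure ℝ} {f : ℝ → ℝ} :
    ∫ x, ((f x : ℝ) : ℂ) ∂μ = ((∫ x, f x ∂μ : ℝ) : ℂ) := integral_ofReal

/-- For `t ∉ supp(μ)` and any sequence `wₙ ∈ ℍ` with `wₙ → t`, one has
`χ_L(wₙ) → χ_E(t)` and `η_L(wₙ) → η_E(t)`. -/
theorem chiL_etaL_tendsto_chiE_etaE (μ : Measure ℝ) (a b : ℝ) [IsProbabilityMeasure μ]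
    (hle : μ ≤ volume) (hsupp : msupport μ ⊆ Set.Icc a b)
    (ha : a ∈ msupport μ) (hb : b ∈ msupport μ) (hab : 1 < b - a)
    (t : ℝ) (ht : t ∉ msupport μ) (w : ℕ → ℂ) (hw : ∀ n, 0 < (w n).im)
    (hlim : Filter.Tendsto w Filter.atTop (nhds (t : ℂ))) :
    Filter.Tendsto (fun n => chiL μ (w n)) Filter.atTop (nhds ((chiE μ t : ℝ) : ℂ)) ∧
    Filter.Tendsto (fun n => etaL μ (w n)) Filter.atTop (nhds ((etaE μ t : ℝ) : ℂ)) := by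
  clear hsupp ha hb hab hle
  -- a ball around t of measure zero
  obtain ⟨ε, hε, hμball⟩ : ∃ ε > 0, μ (Metric.ball t ε) = 0 := by
    simp only [msupport, mem_setOf_eq, not_forall] at ht
    obtain ⟨U, hU, hμU⟩ := ht
    rw [not_ne_iff] at hμU
    obtain ⟨δ, hδ, hball⟩ := Metric.mem_nhds_iff.mp hU
    exact ⟨δ, hδ, measure_mono_null hball hμU⟩
  have hae : ∀ᵐ x ∂μ, ε ≤ |x - t| := by
    have h := measure_eq_zero_iff_ae_notMem.mp hμball
    filter_upwards [h] with x hx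
    rw [Metric.mem_ball, Real.dist_eq, not_lt] at hx
    exact hx
  -- lower bound on |u - x|
  have key : ∀ (u : ℂ) (x : ℝ), ε ≤ |x - t| → ‖u - (t : ℂ)‖ < ε / 2 →
      ε / 2 ≤ ‖u - (x : ℂ)‖ := by
    intro u x hx hu
    have h1 : ‖((x : ℂ) - (t : ℂ))‖ = |x - t| := by
      rw [← Complex.ofReal_sub, Complex.norm_real, Real.norm_eq_abs]
    have h2 : ‖((x : ℂ) - t) - (u - t)‖ = ‖u - (x : ℂ)‖ := by
      rw [show ((x : ℂ) - t) - (u - t) = -(u - x) by ring, norm_neg]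
    calc ε / 2 = ε - ε / 2 := by ring
      _ ≤ ‖((x : ℂ) - t)‖ - ‖u - (t : ℂ)‖ := by rw [h1]; linarith
      _ ≤ ‖((x : ℂ) - t) - (u - t)‖ := norm_sub_norm_le _ _
      _ = ‖u - (x : ℂ)‖ := h2
  have hmeas : ∀ u : ℂ, AEStronglyMeasurable (fun x : ℝ => (u - (x : ℂ))⁻¹) μ := fun u =>
    ((measurable_const.sub Complex.measurable_ofReal).inv).aestronglyMeasurable
  have hmeas' : ∀ u : ℂ, AEStronglyMeasurable (fun x : ℝ => -(((u - (x : ℂ)) ^ 2)⁻¹)) μ :=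
    fun u => ((((measurable_const.sub Complex.measurable_ofReal).pow_const 2).inv).neg
      ).aestronglyMeasurable
  -- differentiability of the Cauchy transform near t
  have hderiv : ∀ w₀ ∈ Metric.ball (t : ℂ) (ε / 4),
      HasDerivAt (cauchy μ) (∫ x, -(((w₀ - (x : ℂ)) ^ 2)⁻¹) ∂μ) w₀ := by
    intro w₀ hw₀
    rw [Metric.mem_ball, dist_eq_norm] at hw₀
    have hw₀' : ‖w₀ - (t : ℂ)‖ < ε / 2 := lt_of_lt_of_le hw₀ (by linarith)
    have hint : Integrable (fun x : ℝ => (w₀ - (x : ℂ))⁻¹) μ := by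
      refine Integrable.mono' (integrable_const ((ε / 2)⁻¹)) (hmeas w₀) ?_
      filter_upwards [hae] with x hx
      rw [norm_inv]
      exact inv_anti₀ (by linarith) (key w₀ x hx hw₀')
    have hres := hasDerivAt_integral_of_dominated_loc_of_deriv_le
      (F := fun u (x : ℝ) => (u - (x : ℂ))⁻¹)
      (F' := fun u (x : ℝ) => -(((u - (x : ℂ)) ^ 2)⁻¹))
      (bound := fun _ => (((ε / 2) ^ 2)⁻¹ : ℝ))
      (Metric.ball_mem_nhds w₀ (show (0 : ℝ) < ε / 4 by linarith))
      (Eventually.of_forall fun u => hmeas u) hint (hmeas' w₀) ?_ (integrable_const _) ?_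
    · exact hres.2
    · filter_upwards [hae] with x hx u hu
      rw [Metric.mem_ball, dist_eq_norm] at hu
      have hut : ‖u - (t : ℂ)‖ < ε / 2 := by
        calc ‖u - (t : ℂ)‖ ≤ ‖u - w₀‖ + ‖w₀ - (t : ℂ)‖ := norm_sub_le_norm_sub_add_norm_sub _ _ _
          _ < ε / 4 + ε / 4 := add_lt_add hu hw₀
          _ ≤ ε / 2 := by linarith
      have hge := key u x hx hut
      rw [norm_neg, norm_inv, norm_pow]
      refine inv_anti₀ (by positivity) ?_
      exact pow_le_pow_left₀ (by linarith) hge 2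
    · filter_upwards [hae] with x hx u hu
      rw [Metric.mem_ball, dist_eq_norm] at hu
      have hut : ‖u - (t : ℂ)‖ < ε / 2 := by
        calc ‖u - (t : ℂ)‖ ≤ ‖u - w₀‖ + ‖w₀ - (t : ℂ)‖ := norm_sub_le_norm_sub_add_norm_sub _ _ _
          _ < ε / 4 + ε / 4 := add_lt_add hu hw₀
          _ ≤ ε / 2 := by linarith
      have hne : u - (x : ℂ) ≠ 0 := by
        intro h
        have := key u x hx hut
        rw [h, norm_zero] at this
        linarith
      have hd : HasDerivAt (fun y : ℂ => (y - (x : ℂ))⁻¹) (-1 / (id u - (x : ℂ)) ^ 2) u :=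
        ((hasDerivAt_id u).sub_const ((x : ℝ) : ℂ)).inv hne
      exact hd.congr_deriv (by simp only [id_eq, neg_div, one_div])
  have htball : (t : ℂ) ∈ Metric.ball (t : ℂ) (ε / 4) :=
    Metric.mem_ball_self (by linarith)
  -- identification of values at t
  have hval : (∫ x, -((((t : ℂ) - (x : ℂ)) ^ 2)⁻¹) ∂μ) = ((Cder μ t : ℝ) : ℂ) := by
    have hc : ∀ x : ℝ, -((((t : ℂ) - (x : ℂ)) ^ 2)⁻¹) = ((-(((t - x) ^ 2)⁻¹) : ℝ) : ℂ) := by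
      intro x; push_cast; ring
    simp_rw [hc]
    rw [integral_ofReal'', integral_neg]
    simp [Cder]
  have hCt : cauchy μ (t : ℂ) = ((Creal μ t : ℝ) : ℂ) := by
    have hc : ∀ x : ℝ, ((t : ℂ) - (x : ℂ))⁻¹ = (((t - x)⁻¹ : ℝ) : ℂ) := by
      intro x; push_cast; ring
    rw [cauchy]
    simp_rw [hc]
    rw [integral_ofReal'']
    rfl
  -- strict differentiability at t
  have hanal : AnalyticAt ℂ (cauchy μ) (t : ℂ) := by
    have hdiffOn : DifferentiableOn ℂ (cauchy μ) (Metric.ball (t : ℂ) (ε / 4)) :=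
      fun u hu => ((hderiv u hu).differentiableAt).differentiableWithinAt
    exact hdiffOn.analyticAt (Metric.ball_mem_nhds _ (by linarith))
  obtain ⟨p, hp⟩ := hanal
  have hs := hp.hasStrictDerivAt
  have hat : HasDerivAt (cauchy μ) ((Cder μ t : ℝ) : ℂ) (t : ℂ) := hval ▸ hderiv _ htball
  have hpe : (p 1 fun _ => 1) = ((Cder μ t : ℝ) : ℂ) := hs.hasDerivAt.unique hat
  rw [hpe] at hs
  -- positivity: Cder μ t ≠ 0
  have hint_real : Integrable (fun x : ℝ => ((t - x) ^ 2)⁻¹) μ := by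
    refine Integrable.mono' (integrable_const ((ε ^ 2)⁻¹))
      (((measurable_const.sub measurable_id).pow_const 2).inv).aestronglyMeasurable ?_
    filter_upwards [hae] with x hx
    rw [Real.norm_eq_abs, abs_inv, _root_.abs_pow]
    refine inv_anti₀ (by positivity) ?_
    calc ε ^ 2 ≤ |x - t| ^ 2 := pow_le_pow_left₀ hε.le hx 2
      _ = |t - x| ^ 2 := by rw [abs_sub_comm]
  have hCder_neg : Cder μ t < 0 := by
    rw [Cder, neg_lt, neg_zero]
    rw [integral_pos_iff_support_of_nonneg_ae
      (Eventually.of_forall fun x => inv_nonneg.2 (sq_nonneg _)) hint_real]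
    have hsub : {t}ᶜ ⊆ Function.support fun x : ℝ => ((t - x) ^ 2)⁻¹ := by
      intro x hx
      simp only [Function.mem_support, ne_eq, inv_eq_zero]
      intro h
      have h2 : t - x = 0 := pow_eq_zero_iff two_ne_zero |>.mp h
      exact hx (by simp only [mem_singleton_iff]; linarith)
    have h1 : μ ({t}ᶜ) = 1 := by
      rw [prob_compl_eq_one_sub (measurableSet_singleton t)]
      have : μ {t} = 0 :=
        measure_mono_null (by simp [Metric.mem_ball, hε]) hμball
      simp [this]
    calc (0 : ENNReal) < 1 := by norm_num
      _ = μ ({t}ᶜ) := h1.symm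
      _ ≤ μ (Function.support fun x : ℝ => ((t - x) ^ 2)⁻¹) := measure_mono hsub
  have hCder_ne : (Cder μ t : ℝ) ≠ 0 := ne_of_lt hCder_neg
  -- conjugation symmetry
  have hconj : ∀ u : ℂ, cauchy μ ((starRingEnd ℂ) u) = (starRingEnd ℂ) (cauchy μ u) := by
    intro u
    rw [cauchy, cauchy, ← integral_conj]
    congr 1
    funext x
    rw [map_inv₀, map_sub, Complex.conj_ofReal]
  -- the function g = exp ∘ cauchy and its strict derivative
  set g : ℂ → ℂ := fun u => Complex.exp (cauchy μ u) with hg_def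
  set g' : ℂ := Complex.exp (cauchy μ (t : ℂ)) * ((Cder μ t : ℝ) : ℂ) with hg'_def
  have hgs : HasStrictDerivAt g g' (t : ℂ) := hs.cexp
  have hg'_ne : g' ≠ 0 :=
    mul_ne_zero (Complex.exp_ne_zero _) (by exact_mod_cast hCder_ne)
  -- sequences
  set v : ℕ → ℂ := fun n => (starRingEnd ℂ) (w n) with hv_def
  have hvlim : Tendsto v atTop (nhds (t : ℂ)) := by
    have := (Complex.continuous_conj.tendsto (t : ℂ)).comp hlim
    rwa [Complex.conj_ofReal] at this
  have hd : ∀ n, w n - v n ≠ 0 := by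
    intro n h
    have him : (w n - v n).im = 2 * (w n).im := by
      simp [hv_def, Complex.sub_im, Complex.conj_im]; ring
    rw [h] at him
    simp only [Complex.zero_im] at him
    have := hw n
    linarith
  -- the difference quotient tends to g'
  have hquot : Tendsto (fun n => (g (w n) - g (v n)) / (w n - v n)) atTop (nhds g') := by
    have hpair : Tendsto (fun n => (w n, v n)) atTop (nhds ((t : ℂ), (t : ℂ))) :=
      hlim.prodMk_nhds hvlim
    have hlo := hgs.hasStrictFDerivAt.isLittleO
    have hcomp := hlo.comp_tendsto hpair
    have hdiv := hcomp.tendsto_div_nhds_zero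
    have heq : ∀ n, (g (w n) - g (v n) -
        (ContinuousLinearMap.smulRight (1 : ℂ →L[ℂ] ℂ) g') (w n - v n)) / (w n - v n)
        = (g (w n) - g (v n)) / (w n - v n) - g' := by
      intro n
      rw [ContinuousLinearMap.smulRight_apply, ContinuousLinearMap.one_apply, smul_eq_mul,
        sub_div, mul_comm, mul_div_assoc, div_self (hd n), mul_one]
    simp only [Function.comp_def, ← ContinuousLinearMap.smulRight_one_eq_toSpanSingleton] at hdiv
    simp_rw [heq] at hdiv
    have := hdiv.add_const g'
    simpa using this
  -- continuity limits for exp(cauchy ·)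
  have hCcont : ContinuousAt (cauchy μ) (t : ℂ) := hat.continuousAt
  have hEw : Tendsto (fun n => Complex.exp (cauchy μ (w n))) atTop
      (nhds (Complex.exp (cauchy μ (t : ℂ)))) :=
    (Complex.continuous_exp.continuousAt.comp hCcont).tendsto.comp hlim
  have hEv : Tendsto (fun n => Complex.exp (cauchy μ (v n))) atTop
      (nhds (Complex.exp (cauchy μ (t : ℂ)))) :=
    (Complex.continuous_exp.continuousAt.comp hCcont).tendsto.comp hvlim
  set E : ℂ := Complex.exp (cauchy μ (t : ℂ)) with hE_def
  have hEr : E = ((Real.exp (Creal μ t) : ℝ) : ℂ) := by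
    rw [hE_def, hCt, Complex.ofReal_exp]
  -- rewrite chiL and etaL
  have hchiL : ∀ n, chiL μ (w n) = w n + (Complex.exp (cauchy μ (v n)) - 1) /
      ((g (w n) - g (v n)) / (w n - v n)) := by
    intro n
    rw [chiL]
    congr 1
    rw [show (w n - (starRingEnd ℂ) (w n)) * (Complex.exp (cauchy μ ((starRingEnd ℂ) (w n))) - 1)
        = (Complex.exp (cauchy μ (v n)) - 1) * (w n - v n) by rw [hv_def]; ring,
      show Complex.exp (cauchy μ (w n)) - Complex.exp (cauchy μ ((starRingEnd ℂ) (w n)))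
        = g (w n) - g (v n) by rw [hv_def, hg_def],
      div_div_eq_mul_div]
  have hetaL : ∀ n, etaL μ (w n) = 1 + ((Complex.exp (cauchy μ (w n)) - 1) *
      (Complex.exp (cauchy μ (v n)) - 1)) /
      ((g (w n) - g (v n)) / (w n - v n)) := by
    intro n
    rw [etaL]
    congr 1
    rw [show (w n - (starRingEnd ℂ) (w n)) * (Complex.exp (cauchy μ (w n)) - 1) *
        (Complex.exp (cauchy μ ((starRingEnd ℂ) (w n))) - 1)
        = ((Complex.exp (cauchy μ (w n)) - 1) * (Complex.exp (cauchy μ (v n)) - 1)) *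
          (w n - v n) by rw [hv_def]; ring,
      show Complex.exp (cauchy μ (w n)) - Complex.exp (cauchy μ ((starRingEnd ℂ) (w n)))
        = g (w n) - g (v n) by rw [hv_def, hg_def],
      div_div_eq_mul_div]
  constructor
  · have hlim1 : Tendsto (fun n => w n + (Complex.exp (cauchy μ (v n)) - 1) /
        ((g (w n) - g (v n)) / (w n - v n))) atTop (nhds ((t : ℂ) + (E - 1) / g')) :=
      hlim.add (((hEv.sub tendsto_const_nhds)).div hquot hg'_ne)
    have hfinal : ((chiE μ t : ℝ) : ℂ) = (t : ℂ) + (E - 1) / g' := by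
      rw [chiE, hg'_def, hE_def, hCt, ← Complex.ofReal_exp]
      push_cast
      ring
    rw [hfinal]
    exact hlim1.congr fun n => (hchiL n).symm
  · have hlim1 : Tendsto (fun n => 1 + ((Complex.exp (cauchy μ (w n)) - 1) *
        (Complex.exp (cauchy μ (v n)) - 1)) /
        ((g (w n) - g (v n)) / (w n - v n))) atTop
        (nhds (1 + ((E - 1) * (E - 1)) / g')) :=
      tendsto_const_nhds.add ((((hEw.sub tendsto_const_nhds)).mul
        (hEv.sub tendsto_const_nhds)).div hquot hg'_ne)
    have hfinal : ((etaE μ t : ℝ) : ℂ) = (1 : ℂ) + ((E - 1) * (E - 1)) / g' := by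
      rw [etaE, hg'_def, hE_def, hCt, ← Complex.ofReal_exp]
      push_cast
      ring
    rw [hfinal]
    exact hlim1.congr fun n => (hetaL n).symm
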